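/- Let E be a real inner product space, f : E → ℝ convex and differentiable, x* with f(x*) ≤ f(x) for all x, and let p > 0 and C > 0 be real numbers, t₀ > 0. Suppose X, V, A : ℝ → E satisfy, for every t ≥ t₀: X has derivative V t at t, V has derivative A t at t, and A t + ((p+1)/t) • V t + (C p² t^{p−2}) • ∇f(X t) = 0. Then for every t ≥ t₀: f(X t) − f(x*) ≤ E₀ / (C t^p), where E₀ = (1/2)‖X t₀ + (t₀/p) • V t₀ − x*‖² + C t₀^p (f(X t₀) − f(x*)). -/

import Mathlib

open Real
open scoped RealInnerProductSpace

/-- Convergence rate of the Euclidean polynomial Euler–Lagrange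
equation `Ẍ_t + ((p+1)/t) Ẋ_t + C p² t^{p−2} ∇f(X_t) = 0` (equation (46) of the
paper): `f (X t) − f x* ≤ E₀ / (C t^p)`, where
`E₀ = ½‖X t₀ + (t₀/p) Ẋ t₀ − x*‖² + C t₀^p (f (X t₀) − f x*)`. -/
theorem euclidean_polynomial_euler_lagrange_rate
    {E : Type*} [NormedAddCommGroup E] [InnerProductSpace ℝ E] [CompleteSpace E]
    (f : E → ℝ) (hf : Differentiable ℝ f)
    (hconv : ∀ a b : E, f a + ⟪gradient f a, b - a⟫ ≤ f b)
    (xstar : E) (hmin : ∀ a, f xstar ≤ f a)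
    (p C t₀ : ℝ) (hp : 0 < p) (hC : 0 < C) (ht₀ : 0 < t₀)
    (X V A : ℝ → E)
    (hX : ∀ t ≥ t₀, HasDerivAt X (V t) t)
    (hV : ∀ t ≥ t₀, HasDerivAt V (A t) t)
    (hODE : ∀ t ≥ t₀,
      A t + ((p + 1) / t) • V t + (C * p ^ 2 * t ^ (p - 2)) • gradient f (X t) = 0) :
    ∀ t ≥ t₀, f (X t) - f xstar ≤
      ((1 / 2) * ‖X t₀ + (t₀ / p) • V t₀ - xstar‖ ^ 2
        + C * t₀ ^ p * (f (X t₀) - f xstar)) / (C * t ^ p) := by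
  have hp' : p ≠ 0 := ne_of_gt hp
  set g : ℝ → ℝ := fun t =>
    (1/2) * ‖X t + (t/p) • V t - xstar‖ ^ 2 + C * t ^ p * (f (X t) - f xstar) with hgdef
  have key : ∀ t ≥ t₀, HasDerivAt g
      (C * p * t ^ (p-1) * ((f (X t) - f xstar) - ⟪gradient f (X t), X t - xstar⟫)) t := by
    intro t ht
    have htpos : (0:ℝ) < t := lt_of_lt_of_le ht₀ ht
    have ht0 : t ≠ 0 := ne_of_gt htpos
    have hrw : t ^ (p-1) = t ^ (p-2) * t := by
      rw [← Real.rpow_add_one ht0]; congr 1; ring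
    have hrw2 : t ^ p = t ^ (p-1) * t := by
      rw [← Real.rpow_add_one ht0]; congr 1; ring
    have hZraw : HasDerivAt (fun s => X s + (s/p) • V s - xstar)
        (V t + ((t/p) • A t + (1/p) • V t)) t := by
      have h1 : HasDerivAt (fun s : ℝ => s / p) (1/p) t := by
        simpa using (hasDerivAt_id t).div_const p
      exact ((hX t ht).add (h1.smul (hV t ht))).sub_const xstar
    have hA : A t = -(((p+1)/t) • V t + (C * p^2 * t^(p-2)) • gradient f (X t)) := by
      have h := hODE t ht
      rw [add_assoc] at h
      exact eq_neg_of_add_eq_zero_left h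
    have hW : V t + ((t/p) • A t + (1/p) • V t)
        = -((C * p * t ^ (p-1)) • gradient f (X t)) := by
      rw [hA]
      match_scalars
      · field_simp; ring
      · rw [hrw]; field_simp
    rw [hW] at hZraw
    have hsq : HasDerivAt (fun s => (1/2) * ‖X s + (s/p) • V s - xstar‖ ^ 2)
        ((1/2) * (⟪X t + (t/p) • V t - xstar, -((C * p * t ^ (p-1)) • gradient f (X t))⟫
          + ⟪-((C * p * t ^ (p-1)) • gradient f (X t)), X t + (t/p) • V t - xstar⟫)) t := by
      have h2 := (hZraw.inner ℝ hZraw).const_mul (1/2)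
      simpa [real_inner_self_eq_norm_sq, mul_add] using h2
    have hfX : HasDerivAt (fun s => f (X s)) ⟪gradient f (X t), V t⟫ t := by
      have hg1 := (hf (X t)).hasGradientAt
      have := hg1.hasFDerivAt.comp_hasDerivAt t (hX t ht)
      simpa [InnerProductSpace.toDual_apply_apply, Function.comp_def] using this
    have hpow : HasDerivAt (fun s : ℝ => C * s ^ p) (C * (p * t ^ (p-1))) t :=
      (Real.hasDerivAt_rpow_const (Or.inl ht0)).const_mul C
    have hterm2 : HasDerivAt (fun s => C * s ^ p * (f (X s) - f xstar))
        (C * (p * t^(p-1)) * (f (X t) - f xstar) + C * t^p * ⟪gradient f (X t), V t⟫) t :=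
      hpow.mul (hfX.sub_const (f xstar))
    have htot := hsq.add hterm2
    convert htot using 1
    · rfl
    · rfl
    · rfl
    simp only [inner_neg_left, inner_neg_right, real_inner_smul_left, real_inner_smul_right,
      inner_add_left, inner_add_right, inner_sub_left, inner_sub_right]
    rw [hrw2, real_inner_comm (V t) (gradient f (X t)),
      real_inner_comm xstar (gradient f (X t)), real_inner_comm (X t) (gradient f (X t))]
    field_simp
    ring
  have hanti : AntitoneOn g (Set.Ici t₀) := by
    apply antitoneOn_of_deriv_nonpos (convex_Ici t₀)
    · intro t ht
      exact ((key t ht).continuousAt).continuousWithinAt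
    · intro t ht
      rw [interior_Ici] at ht
      exact ((key t (le_of_lt ht)).differentiableAt).differentiableWithinAt
    · intro t ht
      rw [interior_Ici] at ht
      rw [(key t ht.le).deriv]
      have htpos : (0:ℝ) < t := lt_trans ht₀ ht
      have hc : 0 ≤ C * p * t^(p-1) := by positivity
      have hconv' : f (X t) - f xstar - ⟪gradient f (X t), X t - xstar⟫ ≤ 0 := by
        have h1 := hconv (X t) xstar
        have h2 : ⟪gradient f (X t), xstar - X t⟫ = -⟪gradient f (X t), X t - xstar⟫ := by
          rw [← inner_neg_right]; congr 1; abel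
        rw [h2] at h1
        linarith
      exact mul_nonpos_iff.mpr (Or.inl ⟨hc, hconv'⟩)
  intro t ht
  have hgle : g t ≤ g t₀ := hanti Set.self_mem_Ici ht ht
  have htp : 0 < C * t ^ p := mul_pos hC (Real.rpow_pos_of_pos (lt_of_lt_of_le ht₀ ht) p)
  rw [le_div_iff₀ htp]
  have hn : 0 ≤ (1/2) * ‖X t + (t/p) • V t - xstar‖^2 := by positivity
  have h1 : (f (X t) - f xstar) * (C * t ^ p) ≤ g t := by
    simp only [hgdef]
    nlinarith [hn]
  calc (f (X t) - f xstar) * (C * t ^ p) ≤ g t := h1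
    _ ≤ g t₀ := hgle
    _ = (1 / 2) * ‖X t₀ + (t₀ / p) • V t₀ - xstar‖ ^ 2
        + C * t₀ ^ p * (f (X t₀) - f xstar) := rfl
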